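/- (Entropy dissipation.) Let (f,ρ) be a classical solution of the kinetic-reaction system on the torus, i.e. f_i : [0,L]^d × ℝ^d × [0,∞) → ℝ (i = 1,…,N_l) and ρ_i : [0,L]^d × [0,∞) → ℝ (i = N_l+1,…,N) are C¹, L-periodic in x, satisfy ∂_t f_i + v·∇_x f_i = Σ_{j=1}^N (k_{ij} ρ_j M_i − k_{ji} f_i) and ∂_t ρ_i = Σ_{j=1}^N (k_{ij} ρ_j − k_{ji} ρ_i) pointwise, and are such that for every t the squared ℋ-norm ‖(f,ρ)(t)‖² and its formal time derivative are finite and differentiation under the integral is justified. Then (d/dt) (1/2)‖(f,ρ)(t)‖² = ⟨L(f,ρ)(t), (f,ρ)(t)⟩ ≤ 0, where ⟨L(f,ρ),(f,ρ)⟩ = Σ_{i=1}^N ∫_{[0,L]^d} ∫_{ℝ^d} (Σ_{j=1}^N (k_{ij} ρ_j M_i − k_{ji} f_i)) f_i/(η_i M_i) dv dx (with the convention f_i = ρ_i M_i and M_i replaced by the point mass at v = 0 for i > N_l). -/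

import Mathlib

open MeasureTheory Finset Real

noncomputable section

/-- Partial derivative in the `l`-th coordinate. -/
def pd {d : ℕ} (g : (Fin d → ℝ) → ℝ) (l : Fin d) (x : Fin d → ℝ) : ℝ :=
  deriv (fun y => g (Function.update x l y)) (x l)

/-- The periodic box `[0,L]^d`. -/
def box (d : ℕ) (L : ℝ) : Set (Fin d → ℝ) := Set.Icc 0 (fun _ => L)

/-- The squared ℋ-norm of the state `(f,ρ)` at time `t`. -/
def Hsq (d N Nl : ℕ) (L : ℝ) (η : Fin N → ℝ) (Mi : Fin N → (Fin d → ℝ) → ℝ)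
    (f : Fin N → (Fin d → ℝ) → (Fin d → ℝ) → ℝ → ℝ)
    (ρ : Fin N → (Fin d → ℝ) → ℝ → ℝ) (t : ℝ) : ℝ :=
  ∑ i : Fin N,
    if (i : ℕ) < Nl then
      ∫ x in box d L, ∫ v, (f i x v t) ^ 2 / (η i * Mi i v)
    else
      ∫ x in box d L, (ρ i x t) ^ 2 / η i

/-- The entropy dissipation `⟨L(f,ρ),(f,ρ)⟩` at time `t` (with the convention that for the
nonmoving species the velocity variable collapses to the point mass at `v = 0`). -/
def diss (d N Nl : ℕ) (L : ℝ) (k : Fin N → Fin N → ℝ) (η : Fin N → ℝ)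
    (Mi : Fin N → (Fin d → ℝ) → ℝ)
    (f : Fin N → (Fin d → ℝ) → (Fin d → ℝ) → ℝ → ℝ)
    (ρ : Fin N → (Fin d → ℝ) → ℝ → ℝ) (t : ℝ) : ℝ :=
  ∑ i : Fin N,
    if (i : ℕ) < Nl then
      ∫ x in box d L, ∫ v,
        (∑ j, (k i j * ρ j x t * Mi i v - k j i * f i x v t)) * f i x v t / (η i * Mi i v)
    else
      ∫ x in box d L,
        (∑ j, (k i j * ρ j x t - k j i * ρ i x t)) * ρ i x t / η i

namespace ED

variable {d : ℕ}

lemma pd_hasDerivAt {g : (Fin d → ℝ) → ℝ} {x : Fin d → ℝ} (hg : DifferentiableAt ℝ g x)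
    (l : Fin d) :
    HasDerivAt (fun y => g (Function.update x l y)) (fderiv ℝ g x (Pi.single l 1)) (x l) := by
  have h1 : HasDerivAt (Function.update x l) (Pi.single l (1:ℝ)) (x l) :=
    hasDerivAt_update x l (x l)
  have h2 := hg.hasFDerivAt
  have h3 : Function.update x l (x l) = x := Function.update_eq_self l x
  rw [← h3] at h2
  simpa [h3, Function.comp_def] using h2.comp_hasDerivAt (x l) h1

lemma pd_eq {g : (Fin d → ℝ) → ℝ} {x : Fin d → ℝ} (hg : DifferentiableAt ℝ g x) (l : Fin d) :
    pd g l x = fderiv ℝ g x (Pi.single l 1) :=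
  (pd_hasDerivAt hg l).deriv

lemma pd_hasDerivAt' {g : (Fin d → ℝ) → ℝ} {x : Fin d → ℝ} (hg : DifferentiableAt ℝ g x)
    (l : Fin d) :
    HasDerivAt (fun y => g (Function.update x l y)) (pd g l x) (x l) := by
  rw [pd_eq hg l]; exact pd_hasDerivAt hg l

lemma pd_continuous {g : (Fin d → ℝ) → ℝ} (hg : ContDiff ℝ 1 g) (l : Fin d) :
    Continuous (pd g l) := by
  have : pd g l = fun x => fderiv ℝ g x (Pi.single l 1) :=
    funext fun x => pd_eq (hg.differentiable one_ne_zero x) l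
  rw [this]
  exact (hg.continuous_fderiv one_ne_zero).clm_apply continuous_const

lemma pd_sq {g : (Fin d → ℝ) → ℝ} (hg : ContDiff ℝ 1 g) (l : Fin d) (x : Fin d → ℝ) :
    pd (fun y => g y ^ 2) l x = 2 * (pd g l x * g x) := by
  have hu : HasDerivAt (fun y => g (Function.update x l y)) (pd g l x) (x l) :=
    pd_hasDerivAt' (hg.differentiable one_ne_zero x) l
  have h2 := hu.pow 2
  have : pd (fun y => g y ^ 2) l x
      = deriv (fun y => (g (Function.update x l y)) ^ 2) (x l) := rfl
  rw [this, show (fun y => g (Function.update x l y) ^ 2) = (fun y => g (Function.update x l y)) ^ 2 from rfl, h2.deriv, Function.update_eq_self]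
  ring

end ED

namespace ED

def ins {n : ℕ} (l : Fin (n+1)) (y : ℝ) (z : Fin n → ℝ) : Fin (n+1) → ℝ :=
  Fin.insertNth l y z

@[simp] lemma ins_same {n : ℕ} (l : Fin (n+1)) (y : ℝ) (z : Fin n → ℝ) : ins l y z l = y := by
  simp [ins]

@[simp] lemma ins_succAbove {n : ℕ} (l : Fin (n+1)) (y : ℝ) (z : Fin n → ℝ) (j : Fin n) :
    ins l y z (l.succAbove j) = z j := by
  simp [ins]

lemma update_ins {n : ℕ} (l : Fin (n+1)) (y y' : ℝ) (z : Fin n → ℝ) :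
    Function.update (ins l y z) l y' = ins l y' z := by
  funext m
  rcases eq_or_ne m l with rfl | h
  · simp
  · obtain ⟨j, rfl⟩ := Fin.exists_succAbove_eq h
    rw [Function.update_of_ne h, ins_succAbove, ins_succAbove]

lemma ins_shift {n : ℕ} (l : Fin (n+1)) (L : ℝ) (z : Fin n → ℝ) :
    (fun m => ins l (0:ℝ) z m + if m = l then L else 0) = ins l L z := by
  funext m
  rcases eq_or_ne m l with rfl | h
  · simp
  · obtain ⟨j, rfl⟩ := Fin.exists_succAbove_eq h
    simp [h]

lemma contDiff_ins {n : ℕ} (l : Fin (n+1)) (z : Fin n → ℝ) :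
    ContDiff ℝ 1 (fun y : ℝ => ins l y z) := by
  apply contDiff_pi.2
  intro m
  rcases eq_or_ne m l with rfl | h
  · simp only [ins_same]; exact contDiff_id
  · obtain ⟨j, rfl⟩ := Fin.exists_succAbove_eq h
    simpa only [ins_succAbove] using contDiff_const

lemma continuous_ins2 {n : ℕ} (l : Fin (n+1)) :
    Continuous (fun p : ℝ × (Fin n → ℝ) => ins l p.1 p.2) := by
  apply continuous_pi
  intro m
  rcases eq_or_ne m l with rfl | h
  · simpa only [ins_same] using continuous_fst
  · obtain ⟨j, rfl⟩ := Fin.exists_succAbove_eq h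
    simp only [ins_succAbove]; exact (continuous_apply j).comp continuous_snd

lemma integral_pd_eq_zero {d : ℕ} {L : ℝ} (hL : 0 < L) {g : (Fin d → ℝ) → ℝ}
    (hg : ContDiff ℝ 1 g) (l : Fin d)
    (hper : ∀ x, g (fun m => x m + if m = l then L else 0) = g x) :
    ∫ x in box d L, pd g l x = 0 := by
  cases d with
  | zero => exact absurd l.2 (Nat.not_lt_zero _)
  | succ n =>
  set e : ((Fin (n+1)) → ℝ) ≃ᵐ ℝ × (Fin n → ℝ) :=
    MeasurableEquiv.piFinSuccAbove (fun _ => ℝ) l with he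
  have hmp : MeasurePreserving e.symm volume volume :=
    (volume_preserving_piFinSuccAbove (fun _ : Fin (n+1) => ℝ) l).symm e
  have hesymm : ∀ p : ℝ × (Fin n → ℝ), e.symm p = ins l p.1 p.2 := fun p => rfl
  have hbox : box (n+1) L = Set.Icc (0 : Fin (n+1) → ℝ) (fun _ => L) := rfl
  have hpre : e.symm ⁻¹' (box (n+1) L)
      = Set.Icc (0:ℝ) L ×ˢ Set.Icc (0 : Fin n → ℝ) (fun _ => L) := by
    rw [hbox]
    ext p
    rw [Set.mem_preimage, hesymm]
    have : ins l p.1 p.2 ∈ Set.Icc (0 : Fin (n+1) → ℝ) (fun _ => L) ↔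
        p.1 ∈ Set.Icc ((0 : Fin (n+1) → ℝ) l) L ∧
        p.2 ∈ Set.Icc (fun j => (0 : Fin (n+1) → ℝ) (l.succAbove j)) (fun _ => L) :=
      Fin.insertNth_mem_Icc
    rw [this]
    simp only [Set.mem_prod, Pi.zero_apply]
    rfl
  have h1 : ∫ x in box (n+1) L, pd g l x
      = ∫ p in (Set.Icc (0:ℝ) L ×ˢ Set.Icc (0 : Fin n → ℝ) (fun _ => L)),
          pd g l (ins l p.1 p.2) := by
    rw [← hpre]
    exact (hmp.setIntegral_preimage_emb e.symm.measurableEmbedding _ _).symm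
  rw [h1]
  have hgc : Continuous fun p : ℝ × (Fin n → ℝ) => pd g l (ins l p.1 p.2) :=
    (pd_continuous hg l).comp (continuous_ins2 l)
  have hint : IntegrableOn (fun p : ℝ × (Fin n → ℝ) => pd g l (ins l p.1 p.2))
      (Set.Icc (0:ℝ) L ×ˢ Set.Icc (0 : Fin n → ℝ) (fun _ => L)) volume :=
    hgc.continuousOn.integrableOn_compact (isCompact_Icc.prod isCompact_Icc)
  have hinner : ∀ z : Fin n → ℝ, (∫ y in Set.Icc (0:ℝ) L, pd g l (ins l y z)) = 0 := by
    intro z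
    have hφ : ContDiff ℝ 1 (fun y : ℝ => g (ins l y z)) := hg.comp (contDiff_ins l z)
    have hrw : ∀ y : ℝ, pd g l (ins l y z) = deriv (fun y' => g (ins l y' z)) y := by
      intro y
      have hup : (fun y' => g (Function.update (ins l y z) l y'))
          = fun y' => g (ins l y' z) := by
        funext y'; rw [update_ins]
      have hsame : ins l y z l = y := ins_same l y z
      simp only [pd, hup, hsame]
    simp only [hrw]
    rw [integral_Icc_eq_integral_Ioc, ← intervalIntegral.integral_of_le hL.le]
    rw [intervalIntegral.integral_deriv_eq_sub (fun y _ => (hφ.differentiable one_ne_zero y))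
      ((hφ.continuous_deriv le_rfl).intervalIntegrable _ _)]
    have hp := hper (ins l (0:ℝ) z)
    rw [ins_shift] at hp
    rw [hp, sub_self]
  have hint' : Integrable (fun p : ℝ × (Fin n → ℝ) => pd g l (ins l p.1 p.2))
      ((volume.restrict (Set.Icc (0:ℝ) L)).prod
        (volume.restrict (Set.Icc (0 : Fin n → ℝ) (fun _ => L)))) := by
    rw [MeasureTheory.Measure.prod_restrict]
    rw [MeasureTheory.Measure.volume_eq_prod] at hint
    exact hint
  rw [MeasureTheory.Measure.volume_eq_prod, ← MeasureTheory.Measure.prod_restrict]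
  rw [MeasureTheory.integral_prod_symm _ hint']
  simp only [hinner, integral_zero]

lemma integral_pd_mul_self {d : ℕ} {L : ℝ} (hL : 0 < L) {g : (Fin d → ℝ) → ℝ}
    (hg : ContDiff ℝ 1 g) (l : Fin d)
    (hper : ∀ x, g (fun m => x m + if m = l then L else 0) = g x) :
    ∫ x in box d L, pd g l x * g x = 0 := by
  have h2 : ContDiff ℝ 1 (fun y => g y ^ 2) := hg.pow 2
  have hper2 : ∀ x : Fin d → ℝ,
      (fun y => g y ^ 2) (fun m => x m + if m = l then L else 0) = (fun y => g y ^ 2) x :=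
    fun x => by simp only [hper x]
  have hz := integral_pd_eq_zero hL h2 l hper2
  have hrw : ∀ x, pd g l x * g x = (1/2) * pd (fun y => g y ^ 2) l x := by
    intro x; rw [pd_sq hg l x]; ring
  simp only [hrw]
  rw [MeasureTheory.integral_const_mul, hz, mul_zero]

end ED

namespace ED

lemma gauss_exp_prod {d : ℕ} {θ : ℝ} (hθ : 0 < θ) (v : Fin d → ℝ) :
    Real.exp (-(∑ l, (v l)^2)/(2*θ)) = ∏ l, Real.exp (-(1/(2*θ)) * (v l)^2) := by
  rw [← Real.exp_sum]
  congr 1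
  rw [← Finset.mul_sum]
  field_simp

lemma gauss_pos {d : ℕ} {θ : ℝ} (hθ : 0 < θ) (v : Fin d → ℝ) :
    0 < (2*π*θ) ^ (-(d:ℝ)/2) * Real.exp (-(∑ l, (v l)^2)/(2*θ)) := by
  have h2 : (0:ℝ) < 2*π*θ := by positivity
  exact mul_pos (Real.rpow_pos_of_pos h2 _) (Real.exp_pos _)

lemma gauss_integrable {d : ℕ} {θ : ℝ} (hθ : 0 < θ) :
    Integrable (fun v : Fin d → ℝ =>
      (2*π*θ) ^ (-(d:ℝ)/2) * Real.exp (-(∑ l, (v l)^2)/(2*θ))) := by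
  have hb : (0:ℝ) < 1/(2*θ) := by positivity
  have h1 : Integrable (fun x : ℝ => Real.exp (-(1/(2*θ)) * x^2)) :=
    integrable_exp_neg_mul_sq hb
  have h2 : Integrable (fun v : Fin d → ℝ => ∏ l, Real.exp (-(1/(2*θ)) * (v l)^2)) :=
    Integrable.fintype_prod (fun _ => h1)
  have := h2.const_mul ((2*π*θ) ^ (-(d:ℝ)/2))
  refine this.congr (Filter.Eventually.of_forall fun v => ?_)
  dsimp only
  rw [gauss_exp_prod hθ v]

lemma gauss_integral {d : ℕ} {θ : ℝ} (hθ : 0 < θ) :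
    ∫ v : Fin d → ℝ, (2*π*θ) ^ (-(d:ℝ)/2) * Real.exp (-(∑ l, (v l)^2)/(2*θ)) = 1 := by
  have hb : (0:ℝ) < 1/(2*θ) := by positivity
  have h2 : (0:ℝ) < 2*π*θ := by positivity
  calc ∫ v : Fin d → ℝ, (2*π*θ) ^ (-(d:ℝ)/2) * Real.exp (-(∑ l, (v l)^2)/(2*θ))
      = (2*π*θ) ^ (-(d:ℝ)/2) * ∫ v : Fin d → ℝ, ∏ l, Real.exp (-(1/(2*θ)) * (v l)^2) := by
        rw [← MeasureTheory.integral_const_mul]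
        congr 1; funext v; rw [gauss_exp_prod hθ v]
    _ = (2*π*θ) ^ (-(d:ℝ)/2) * (∫ x : ℝ, Real.exp (-(1/(2*θ)) * x^2)) ^ d := by
        rw [MeasureTheory.volume_pi, MeasureTheory.integral_fintype_prod_eq_pow (fun x : ℝ => Real.exp (-(1/(2*θ)) * x^2))]
        simp
    _ = (2*π*θ) ^ (-(d:ℝ)/2) * (2*π*θ) ^ ((d:ℝ)/2) := by
        rw [integral_gaussian]
        congr 1
        rw [show π / (1/(2*θ)) = 2*π*θ by field_simp]
        rw [Real.sqrt_eq_rpow, ← Real.rpow_natCast ((2*π*θ) ^ ((1:ℝ)/2)) d,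
          ← Real.rpow_mul h2.le]
        congr 1
        ring
    _ = 1 := by
        rw [← Real.rpow_add h2, show (-(d:ℝ)/2 + (d:ℝ)/2) = 0 by ring, Real.rpow_zero]

end ED

namespace ED

lemma abs_le_bound (a m c : ℝ) (hm : 0 < m) (hc : 0 < c) :
    |a| ≤ c/2 * (a^2/(c*m)) + 1/2 * m := by
  have hx : a^2/(c*m) * (c*m) = a^2 := div_mul_cancel₀ _ (by positivity)
  nlinarith [sq_nonneg (|a| - m), sq_abs a, abs_nonneg a, mul_pos hc hm]

lemma quad_nonpos {N : ℕ} (k : Fin N → Fin N → ℝ) (hk : ∀ i j, 0 ≤ k i j)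
    (η : Fin N → ℝ) (hη : ∀ i, 0 < η i)
    (hbal : ∀ i, ∑ j, (k i j * η j - k j i * η i) = 0)
    (r g : Fin N → ℝ) (hrg : ∀ i, (r i)^2 ≤ η i * g i) :
    ∑ i, ((∑ j, k i j * r j) * r i / η i - (∑ j, k j i) * g i) ≤ 0 := by
  set u : Fin N → ℝ := fun i => r i / η i with hu
  have hbal' : ∀ i, ∑ j, k i j * η j = (∑ j, k j i) * η i := by
    intro i
    have h := hbal i
    rw [Finset.sum_sub_distrib, sub_eq_zero] at h
    rw [h, Finset.sum_mul]
  have key : ∑ i, (∑ j, k i j * r j) * r i / η i ≤ ∑ i, (∑ j, k j i) * g i := by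
    have step1 : ∀ i : Fin N, (∑ j, k i j * r j) * r i / η i
        = ∑ j, k i j * η j * (u j * u i) := by
      intro i
      rw [Finset.sum_mul, Finset.sum_div]
      refine Finset.sum_congr rfl fun j _ => ?_
      have hi := (hη i).ne'
      have hj := (hη j).ne'
      simp only [hu]
      field_simp
    have step2 : ∑ i, (∑ j, k i j * r j) * r i / η i
        ≤ ∑ i, ∑ j, k i j * η j * ((u i ^ 2 + u j ^ 2) / 2) := by
      rw [show (∑ i, (∑ j, k i j * r j) * r i / η i)
          = ∑ i, ∑ j, k i j * η j * (u j * u i) from Finset.sum_congr rfl fun i _ => step1 i]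
      refine Finset.sum_le_sum fun i _ => Finset.sum_le_sum fun j _ => ?_
      have h1 : 0 ≤ k i j * η j := mul_nonneg (hk i j) (hη j).le
      nlinarith [sq_nonneg (u i - u j)]
    have e1 : ∑ i, ∑ j, k i j * η j * (u i ^ 2 / 2) = ∑ i, (∑ j, k j i) * η i * (u i ^ 2 / 2) := by
      refine Finset.sum_congr rfl fun i _ => ?_
      rw [← Finset.sum_mul, hbal' i]
    have e2 : ∑ i, ∑ j, k i j * η j * (u j ^ 2 / 2) = ∑ i, (∑ j, k j i) * η i * (u i ^ 2 / 2) := by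
      rw [Finset.sum_comm]
      refine Finset.sum_congr rfl fun j _ => ?_
      rw [← Finset.sum_mul, ← Finset.sum_mul]
    have e3 : ∑ i, ∑ j, k i j * η j * ((u i ^ 2 + u j ^ 2) / 2)
        = ∑ i, (∑ j, k j i) * η i * u i ^ 2 := by
      have : ∀ i j, k i j * η j * ((u i ^ 2 + u j ^ 2) / 2)
          = k i j * η j * (u i ^ 2 / 2) + k i j * η j * (u j ^ 2 / 2) := fun i j => by ring
      simp only [this, Finset.sum_add_distrib]
      rw [e1, e2, ← Finset.sum_add_distrib]
      refine Finset.sum_congr rfl fun i _ => by ring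
    have e4 : ∀ i, (∑ j, k j i) * η i * u i ^ 2 ≤ (∑ j, k j i) * g i := by
      intro i
      have hB : 0 ≤ ∑ j, k j i := Finset.sum_nonneg fun j _ => hk j i
      have hgi : η i * u i ^ 2 ≤ g i := by
        have hne := (hη i).ne'
        have heq : η i * u i ^ 2 = r i ^ 2 / η i := by
          simp only [hu]
          field_simp
        rw [heq, div_le_iff₀ (hη i)]
        nlinarith [hrg i]
      calc (∑ j, k j i) * η i * u i ^ 2 = (∑ j, k j i) * (η i * u i ^ 2) := by ring
        _ ≤ (∑ j, k j i) * g i := mul_le_mul_of_nonneg_left hgi hB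
    calc ∑ i, (∑ j, k i j * r j) * r i / η i
        ≤ ∑ i, ∑ j, k i j * η j * ((u i ^ 2 + u j ^ 2) / 2) := step2
      _ = ∑ i, (∑ j, k j i) * η i * u i ^ 2 := e3
      _ ≤ ∑ i, (∑ j, k j i) * g i := Finset.sum_le_sum fun i _ => e4 i
  rw [Finset.sum_sub_distrib, sub_nonpos]
  exact key

end ED


set_option maxHeartbeats 1000000 in
/-- Entropy dissipation on the torus: for a classical solution of the kinetic-reaction system,
`(d/dt)(1/2)‖(f,ρ)(t)‖² = ⟨L(f,ρ)(t),(f,ρ)(t)⟩ ≤ 0`. -/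
theorem statement12
    (d N Nl : ℕ) (hd : 1 ≤ d) (hN : 2 ≤ N) (hNl : 1 ≤ Nl) (hNlN : Nl ≤ N)
    (L : ℝ) (hL : 0 < L)
    (k : Fin N → Fin N → ℝ) (hk : ∀ i j, 0 ≤ k i j)
    -- Assumption A1
    (hA1 : ∀ i j : Fin N, Relation.ReflTransGen (fun a b => 0 < k b a) j i)
    (θ : Fin N → ℝ) (hθ : ∀ i : Fin N, (i : ℕ) < Nl → 0 < θ i)
    (Mi : Fin N → (Fin d → ℝ) → ℝ)
    (hMi : ∀ i : Fin N, (i : ℕ) < Nl → ∀ v,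
      Mi i v = (2 * π * θ i) ^ (-(d : ℝ) / 2) * Real.exp (-(∑ l, (v l) ^ 2) / (2 * θ i)))
    (η : Fin N → ℝ) (hηpos : ∀ i, 0 < η i) (hηsum : ∑ i, η i = 1)
    (hηbal : ∀ i, ∑ j, (k i j * η j - k j i * η i) = 0)
    (f : Fin N → (Fin d → ℝ) → (Fin d → ℝ) → ℝ → ℝ)
    (ρ : Fin N → (Fin d → ℝ) → ℝ → ℝ)
    -- C¹ regularity
    (hfC1 : ∀ i : Fin N, (i : ℕ) < Nl →
      ContDiff ℝ 1 (fun p : (Fin d → ℝ) × (Fin d → ℝ) × ℝ => f i p.1 p.2.1 p.2.2))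
    (hρC1 : ∀ i : Fin N, Nl ≤ (i : ℕ) →
      ContDiff ℝ 1 (fun p : (Fin d → ℝ) × ℝ => ρ i p.1 p.2))
    -- L-periodicity in x
    (hfper : ∀ i : Fin N, (i : ℕ) < Nl → ∀ (l : Fin d) x v t,
      f i (fun m => x m + if m = l then L else 0) v t = f i x v t)
    (hρper : ∀ i : Fin N, Nl ≤ (i : ℕ) → ∀ (l : Fin d) x t,
      ρ i (fun m => x m + if m = l then L else 0) t = ρ i x t)
    -- position densities of the kinetic species
    (hρdef : ∀ j : Fin N, (j : ℕ) < Nl → ∀ x t, ρ j x t = ∫ v, f j x v t)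
    -- the kinetic-reaction equations
    (hpde : ∀ i : Fin N, (i : ℕ) < Nl → ∀ x v t, 0 ≤ t →
      deriv (fun s => f i x v s) t + ∑ l, v l * pd (fun y => f i y v t) l x
        = ∑ j, (k i j * ρ j x t * Mi i v - k j i * f i x v t))
    (hode : ∀ i : Fin N, Nl ≤ (i : ℕ) → ∀ x t, 0 ≤ t →
      deriv (fun s => ρ i x s) t = ∑ j, (k i j * ρ j x t - k j i * ρ i x t))
    -- finiteness of the squared ℋ-norm and of its formal time derivative
    (hfin1 : ∀ i : Fin N, (i : ℕ) < Nl → ∀ t : ℝ, 0 ≤ t →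
      IntegrableOn (fun p : (Fin d → ℝ) × (Fin d → ℝ) =>
        (f i p.1 p.2 t) ^ 2 / (η i * Mi i p.2)) ((box d L) ×ˢ Set.univ))
    (hfin2 : ∀ i : Fin N, (i : ℕ) < Nl → ∀ t : ℝ, 0 ≤ t →
      IntegrableOn (fun p : (Fin d → ℝ) × (Fin d → ℝ) =>
        deriv (fun s => f i p.1 p.2 s) t * f i p.1 p.2 t / (η i * Mi i p.2))
        ((box d L) ×ˢ Set.univ))
    (hfin3 : ∀ i : Fin N, (i : ℕ) < Nl → ∀ t : ℝ, 0 ≤ t →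
      IntegrableOn (fun p : (Fin d → ℝ) × (Fin d → ℝ) =>
        (∑ l, p.2 l * pd (fun y => f i y p.2 t) l p.1) * f i p.1 p.2 t / (η i * Mi i p.2))
        ((box d L) ×ˢ Set.univ))
    -- differentiation under the integral sign is justified
    (hder : ∀ t : ℝ, 0 ≤ t →
      HasDerivAt (fun s => Hsq d N Nl L η Mi f ρ s)
        (∑ i : Fin N,
          if (i : ℕ) < Nl then
            ∫ x in box d L, ∫ v,
              2 * f i x v t * deriv (fun s => f i x v s) t / (η i * Mi i v)
          else
            ∫ x in box d L, 2 * ρ i x t * deriv (fun s => ρ i x s) t / η i) t) :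
    ∀ t : ℝ, 0 ≤ t →
      HasDerivAt (fun s => (1 / 2) * Hsq d N Nl L η Mi f ρ s)
        (diss d N Nl L k η Mi f ρ t) t ∧
      diss d N Nl L k η Mi f ρ t ≤ 0 := by
  intro t ht
  have hηne : ∀ i, η i ≠ 0 := fun i => (hηpos i).ne'
  have hbox_eq : box d L = Set.Icc (0 : Fin d → ℝ) (fun _ => L) := rfl
  have hcomp : IsCompact (box d L) := by rw [hbox_eq]; exact isCompact_Icc
  have hMeq : ∀ i : Fin N, (i : ℕ) < Nl → Mi i
      = fun v => (2*π*θ i) ^ (-(d:ℝ)/2) * Real.exp (-(∑ l, (v l)^2)/(2*θ i)) :=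
    fun i hi => funext fun v => hMi i hi v
  have hMpos : ∀ i : Fin N, (i : ℕ) < Nl → ∀ v, 0 < Mi i v := by
    intro i hi v; rw [hMi i hi v]; exact ED.gauss_pos (hθ i hi) v
  have hMint : ∀ i : Fin N, (i : ℕ) < Nl → Integrable (Mi i) := by
    intro i hi; rw [hMeq i hi]; exact ED.gauss_integrable (hθ i hi)
  have hMint1 : ∀ i : Fin N, (i : ℕ) < Nl → (∫ v, Mi i v) = 1 := by
    intro i hi; rw [hMeq i hi]; exact ED.gauss_integral (hθ i hi)
  have hFcont : ∀ i : Fin N, (i : ℕ) < Nl →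
      Continuous (fun p : (Fin d → ℝ) × (Fin d → ℝ) => f i p.1 p.2 t) := by
    intro i hi
    exact (hfC1 i hi).continuous.comp
      (continuous_fst.prodMk (continuous_snd.prodMk continuous_const))
  have hρcont : ∀ i : Fin N, Nl ≤ (i : ℕ) → Continuous (fun x => ρ i x t) := by
    intro i hi
    exact (hρC1 i hi).continuous.comp (continuous_id.prodMk continuous_const)
  haveI hfinμ : IsFiniteMeasure ((volume : Measure (Fin d → ℝ)).restrict (box d L)) :=
    ⟨by rw [Measure.restrict_apply_univ]; exact hcomp.measure_lt_top⟩
  have hconv : ((volume : Measure (Fin d → ℝ)).restrict (box d L)).prod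
        (volume : Measure (Fin d → ℝ))
      = (volume : Measure ((Fin d → ℝ) × (Fin d → ℝ))).restrict ((box d L) ×ˢ Set.univ) := by
    rw [MeasureTheory.Measure.volume_eq_prod, ← MeasureTheory.Measure.prod_restrict,
      Measure.restrict_univ]
  -- product integrability facts for the kinetic species
  have hHprod : ∀ i : Fin N, (i : ℕ) < Nl → Integrable
      (fun p : (Fin d → ℝ) × (Fin d → ℝ) => (f i p.1 p.2 t)^2 / (η i * Mi i p.2))
      (((volume : Measure (Fin d → ℝ)).restrict (box d L)).prod volume) := by
    intro i hi
    rw [hconv]; exact hfin1 i hi t ht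
  have hMprod : ∀ i : Fin N, (i : ℕ) < Nl → Integrable
      (fun p : (Fin d → ℝ) × (Fin d → ℝ) => Mi i p.2)
      (((volume : Measure (Fin d → ℝ)).restrict (box d L)).prod volume) := by
    intro i hi
    have h1 : Integrable (fun _ : Fin d → ℝ => (1:ℝ))
        ((volume : Measure (Fin d → ℝ)).restrict (box d L)) := integrable_const 1
    have := h1.mul_prod (hMint i hi)
    simpa using this
  have hFprod : ∀ i : Fin N, (i : ℕ) < Nl → Integrable
      (fun p : (Fin d → ℝ) × (Fin d → ℝ) => f i p.1 p.2 t)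
      (((volume : Measure (Fin d → ℝ)).restrict (box d L)).prod volume) := by
    intro i hi
    refine Integrable.mono' (((hHprod i hi).const_mul (η i / 2)).add
      ((hMprod i hi).const_mul (1/2))) ((hFcont i hi).aestronglyMeasurable) ?_
    refine Filter.Eventually.of_forall fun p => ?_
    have hb := ED.abs_le_bound (f i p.1 p.2 t) (Mi i p.2) (η i) (hMpos i hi p.2) (hηpos i)
    simpa [Real.norm_eq_abs] using hb
  -- the auxiliary functions G i
  set G : Fin N → (Fin d → ℝ) → ℝ := fun i x =>
    if (i : ℕ) < Nl then ∫ v, (f i x v t)^2 / (η i * Mi i v) else (ρ i x t)^2 / η i with hG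
  have hGpos : ∀ i : Fin N, ¬ (i : ℕ) < Nl → ∀ x, G i x = (ρ i x t)^2 / η i := by
    intro i hi x; simp only [hG, if_neg hi]
  have hGkin : ∀ i : Fin N, (i : ℕ) < Nl → ∀ x,
      G i x = ∫ v, (f i x v t)^2 / (η i * Mi i v) := by
    intro i hi x; simp only [hG, if_pos hi]
  have hGint : ∀ i : Fin N, Integrable (G i) ((volume : Measure (Fin d → ℝ)).restrict (box d L)) := by
    intro i
    by_cases hi : (i : ℕ) < Nl
    · have h2 := (hHprod i hi).integral_prod_left
      refine h2.congr (Filter.Eventually.of_forall fun x => ?_)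
      rw [hGkin i hi x]
    · have hc : Continuous (fun x => (ρ i x t)^2 / η i) :=
        ((hρcont i (le_of_not_gt hi)).pow 2).div_const _
      have h2 : IntegrableOn (fun x => (ρ i x t)^2 / η i) (box d L) volume :=
        hc.continuousOn.integrableOn_compact hcomp
      refine h2.congr (Filter.Eventually.of_forall fun x => ?_)
      rw [hGpos i hi x]
  have hRint : ∀ i : Fin N, (i : ℕ) < Nl →
      Integrable (fun x => ρ i x t) ((volume : Measure (Fin d → ℝ)).restrict (box d L)) := by
    intro i hi
    have h2 := (hFprod i hi).integral_prod_left
    refine h2.congr (Filter.Eventually.of_forall fun x => ?_)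
    exact (hρdef i hi x t).symm
  have hRaesm : ∀ i : Fin N, AEStronglyMeasurable (fun x => ρ i x t)
      ((volume : Measure (Fin d → ℝ)).restrict (box d L)) := by
    intro i
    by_cases hi : (i : ℕ) < Nl
    · exact (hRint i hi).aestronglyMeasurable
    · exact (hρcont i (le_of_not_gt hi)).aestronglyMeasurable
  have hRG : ∀ i : Fin N, ∀ᵐ x ∂((volume : Measure (Fin d → ℝ)).restrict (box d L)),
      (ρ i x t)^2 ≤ η i * G i x := by
    intro i
    by_cases hi : (i : ℕ) < Nl
    · filter_upwards [(hHprod i hi).prod_right_ae, (hFprod i hi).prod_right_ae] with x h1 h2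
      have hceq : ρ i x t = ∫ v, f i x v t := hρdef i hi x t
      have hQeq : (fun v => Mi i v * (f i x v t / Mi i v - ρ i x t)^2)
          = fun v => (η i * ((f i x v t)^2/(η i * Mi i v)) - 2 * ρ i x t * (f i x v t))
              + (ρ i x t)^2 * Mi i v := by
        funext v
        have hm := (hMpos i hi v).ne'
        have hη := hηne i
        field_simp
        ring
      have hsub : Integrable (fun v => η i * ((f i x v t)^2/(η i * Mi i v))
          - 2 * ρ i x t * (f i x v t)) := (h1.const_mul (η i)).sub (h2.const_mul (2 * ρ i x t))
      have hQnn : 0 ≤ ∫ v, Mi i v * (f i x v t / Mi i v - ρ i x t)^2 :=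
        integral_nonneg fun v => mul_nonneg (hMpos i hi v).le (sq_nonneg _)
      rw [hQeq, integral_add hsub ((hMint i hi).const_mul ((ρ i x t)^2)),
        integral_sub (h1.const_mul (η i)) (h2.const_mul (2 * ρ i x t)),
        MeasureTheory.integral_const_mul, MeasureTheory.integral_const_mul,
        MeasureTheory.integral_const_mul, hMint1 i hi, ← hceq] at hQnn
      rw [hGkin i hi x]
      nlinarith [hQnn]
    · refine Filter.Eventually.of_forall fun x => ?_
      rw [hGpos i hi x, mul_div_cancel₀ _ (hηne i)]
  -- each diss summand equals an integral of the quadratic form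
  have hdiss_i : ∀ i : Fin N,
      (if (i : ℕ) < Nl then
        ∫ x in box d L, ∫ v,
          (∑ j, (k i j * ρ j x t * Mi i v - k j i * f i x v t)) * f i x v t / (η i * Mi i v)
      else
        ∫ x in box d L, (∑ j, (k i j * ρ j x t - k j i * ρ i x t)) * ρ i x t / η i)
      = ∫ x in box d L, ((∑ j, k i j * ρ j x t) * ρ i x t / η i - (∑ j, k j i) * G i x) := by
    intro i
    by_cases hi : (i : ℕ) < Nl
    · rw [if_pos hi]
      refine integral_congr_ae ?_
      filter_upwards [(hHprod i hi).prod_right_ae, (hFprod i hi).prod_right_ae] with x h1 h2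
      have hptw : ∀ v, (∑ j, (k i j * ρ j x t * Mi i v - k j i * f i x v t)) * f i x v t
            / (η i * Mi i v)
          = (∑ j, k i j * ρ j x t) / η i * (f i x v t)
            - (∑ j, k j i) * ((f i x v t)^2 / (η i * Mi i v)) := by
        intro v
        have hm := (hMpos i hi v).ne'
        have hη := hηne i
        rw [Finset.sum_sub_distrib, ← Finset.sum_mul, ← Finset.sum_mul]
        field_simp
      simp only [hptw]
      rw [integral_sub (h2.const_mul _) (h1.const_mul _),
        MeasureTheory.integral_const_mul, MeasureTheory.integral_const_mul,
        ← hρdef i hi x t, hGkin i hi x]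
      ring
    · rw [if_neg hi]
      refine integral_congr_ae (Filter.Eventually.of_forall fun x => ?_)
      dsimp only
      rw [hGpos i hi x, Finset.sum_sub_distrib, ← Finset.sum_mul]
      have hη := hηne i
      field_simp
  -- integrability of the quadratic form
  have hR2 : ∀ i : Fin N, Integrable (fun x => (ρ i x t)^2)
      ((volume : Measure (Fin d → ℝ)).restrict (box d L)) := by
    intro i
    by_cases hi : (i : ℕ) < Nl
    · have hmeas : AEStronglyMeasurable (fun x => (ρ i x t)^2)
          ((volume : Measure (Fin d → ℝ)).restrict (box d L)) := by
        exact (hRaesm i).pow 2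
      refine Integrable.mono' ((hGint i).const_mul (η i)) hmeas ?_
      filter_upwards [hRG i] with x hx
      rw [Real.norm_eq_abs, abs_of_nonneg (sq_nonneg _)]
      exact hx
    · exact ((hρcont i (le_of_not_gt hi)).pow 2).continuousOn.integrableOn_compact hcomp
  have hRR : ∀ i j : Fin N, Integrable (fun x => ρ j x t * ρ i x t)
      ((volume : Measure (Fin d → ℝ)).restrict (box d L)) := by
    intro i j
    refine Integrable.mono' (((hR2 j).add (hR2 i)).const_mul (1/2))
      ((hRaesm j).mul (hRaesm i)) ?_
    refine Filter.Eventually.of_forall fun x => ?_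
    rw [Real.norm_eq_abs, abs_mul]
    simp only [Pi.add_apply]
    nlinarith [sq_nonneg (|ρ j x t| - |ρ i x t|), sq_abs (ρ j x t), sq_abs (ρ i x t),
      abs_nonneg (ρ j x t), abs_nonneg (ρ i x t)]
  have hψint : ∀ i : Fin N, Integrable
      (fun x => (∑ j, k i j * ρ j x t) * ρ i x t / η i - (∑ j, k j i) * G i x)
      ((volume : Measure (Fin d → ℝ)).restrict (box d L)) := by
    intro i
    refine Integrable.sub ?_ ((hGint i).const_mul _)
    have heq : (fun x => (∑ j, k i j * ρ j x t) * ρ i x t / η i)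
        = fun x => ∑ j, k i j / η i * (ρ j x t * ρ i x t) := by
      funext x
      rw [Finset.sum_mul, Finset.sum_div]
      refine Finset.sum_congr rfl fun j _ => by ring
    rw [heq]
    exact integrable_finset_sum _ fun j _ => (hRR i j).const_mul _
  -- Part 2 : dissipation is nonpositive
  have key2 : diss d N Nl L k η Mi f ρ t ≤ 0 := by
    have hsum : diss d N Nl L k η Mi f ρ t
        = ∫ x in box d L, ∑ i, ((∑ j, k i j * ρ j x t) * ρ i x t / η i
            - (∑ j, k j i) * G i x) := by
      rw [show diss d N Nl L k η Mi f ρ t = ∑ i, _ from rfl]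
      rw [Finset.sum_congr rfl fun i _ => hdiss_i i]
      rw [← integral_finset_sum _ fun i _ => hψint i]
    rw [hsum]
    refine integral_nonpos_of_ae ?_
    have hall : ∀ᵐ x ∂((volume : Measure (Fin d → ℝ)).restrict (box d L)),
        ∀ i : Fin N, (ρ i x t)^2 ≤ η i * G i x := (MeasureTheory.ae_all_iff).2 hRG
    filter_upwards [hall] with x hx
    exact ED.quad_nonpos k hk η hηpos hηbal (fun i => ρ i x t) (fun i => G i x) hx
  -- Part 1 : the derivative identity
  have hder1 : (1/2) * (∑ i : Fin N,
      if (i : ℕ) < Nl then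
        ∫ x in box d L, ∫ v, 2 * f i x v t * deriv (fun s => f i x v s) t / (η i * Mi i v)
      else
        ∫ x in box d L, 2 * ρ i x t * deriv (fun s => ρ i x s) t / η i)
      = diss d N Nl L k η Mi f ρ t := by
    rw [Finset.mul_sum]
    rw [show diss d N Nl L k η Mi f ρ t = ∑ i, _ from rfl]
    refine Finset.sum_congr rfl fun i _ => ?_
    by_cases hi : (i : ℕ) < Nl
    · rw [if_pos hi, if_pos hi]
      have hI1 : Integrable (fun p : (Fin d → ℝ) × (Fin d → ℝ) =>
          deriv (fun s => f i p.1 p.2 s) t * f i p.1 p.2 t / (η i * Mi i p.2))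
          (((volume : Measure (Fin d → ℝ)).restrict (box d L)).prod volume) := by
        rw [hconv]; exact hfin2 i hi t ht
      have hI2 : Integrable (fun p : (Fin d → ℝ) × (Fin d → ℝ) =>
          (∑ l, p.2 l * pd (fun y => f i y p.2 t) l p.1) * f i p.1 p.2 t / (η i * Mi i p.2))
          (((volume : Measure (Fin d → ℝ)).restrict (box d L)).prod volume) := by
        rw [hconv]; exact hfin3 i hi t ht
      have h123 : (fun p : (Fin d → ℝ) × (Fin d → ℝ) =>
            (∑ j, (k i j * ρ j p.1 t * Mi i p.2 - k j i * f i p.1 p.2 t)) * f i p.1 p.2 t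
              / (η i * Mi i p.2))
          = fun p => (deriv (fun s => f i p.1 p.2 s) t * f i p.1 p.2 t / (η i * Mi i p.2))
              + ((∑ l, p.2 l * pd (fun y => f i y p.2 t) l p.1) * f i p.1 p.2 t
                / (η i * Mi i p.2)) := by
        funext p
        rw [← hpde i hi p.1 p.2 t ht]
        ring
      have hI3 : Integrable (fun p : (Fin d → ℝ) × (Fin d → ℝ) =>
          (∑ j, (k i j * ρ j p.1 t * Mi i p.2 - k j i * f i p.1 p.2 t)) * f i p.1 p.2 t
            / (η i * Mi i p.2))
          (((volume : Measure (Fin d → ℝ)).restrict (box d L)).prod volume) := by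
        rw [h123]; exact hI1.add hI2
      have hzero : (∫ p : (Fin d → ℝ) × (Fin d → ℝ), (∑ l, p.2 l * pd (fun y => f i y p.2 t) l p.1) * f i p.1 p.2 t
            / (η i * Mi i p.2)
          ∂(((volume : Measure (Fin d → ℝ)).restrict (box d L)).prod volume)) = 0 := by
        rw [MeasureTheory.integral_prod_symm _ hI2]
        have hxv : ∀ v : Fin d → ℝ,
            (∫ x in box d L, (∑ l, v l * pd (fun y => f i y v t) l x) * f i x v t
              / (η i * Mi i v)) = 0 := by
          intro v
          have hgC : ContDiff ℝ 1 (fun y : Fin d → ℝ => f i y v t) := by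
            have h := (hfC1 i hi).comp
              ((contDiff_id (𝕜 := ℝ) (E := Fin d → ℝ)).prodMk
                (contDiff_const (c := (v, t))))
            exact h
          have hint_l : ∀ l : Fin d, IntegrableOn
              (fun x => v l * (pd (fun y => f i y v t) l x * f i x v t)) (box d L) volume := by
            intro l
            have hc : Continuous fun x => v l * (pd (fun y => f i y v t) l x * f i x v t) :=
              continuous_const.mul ((ED.pd_continuous hgC l).mul
                ((hgC.continuous)))
            exact hc.continuousOn.integrableOn_compact hcomp
          have e0 : ∀ x : Fin d → ℝ,
              (∑ l, v l * pd (fun y => f i y v t) l x) * f i x v t / (η i * Mi i v)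
              = (∑ l, v l * (pd (fun y => f i y v t) l x * f i x v t)) / (η i * Mi i v) := by
            intro x
            rw [Finset.sum_mul]
            congr 1
            exact Finset.sum_congr rfl fun l _ => by ring
          simp only [e0]
          rw [MeasureTheory.integral_div,
            MeasureTheory.integral_finset_sum _ (fun l _ => hint_l l)]
          have hz : ∀ l : Fin d,
              (∫ x in box d L, v l * (pd (fun y => f i y v t) l x * f i x v t)) = 0 := by
            intro l
            rw [MeasureTheory.integral_const_mul]
            have := ED.integral_pd_mul_self hL hgC l (fun x => hfper i hi l x v t)
            simp only [this, mul_zero]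
          rw [Finset.sum_eq_zero fun l _ => hz l, zero_div]
        simp only [hxv, integral_zero]
      have hiter : ∀ (F : (Fin d → ℝ) × (Fin d → ℝ) → ℝ),
          Integrable F (((volume : Measure (Fin d → ℝ)).restrict (box d L)).prod volume) →
          (∫ x in box d L, ∫ v, F (x, v))
            = ∫ p : (Fin d → ℝ) × (Fin d → ℝ), F p ∂(((volume : Measure (Fin d → ℝ)).restrict (box d L)).prod volume) := by
        intro F hF
        rw [MeasureTheory.integral_prod _ hF]
      have hlhs : (∫ x in box d L, ∫ v,
            2 * f i x v t * deriv (fun s => f i x v s) t / (η i * Mi i v))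
          = 2 * ∫ p : (Fin d → ℝ) × (Fin d → ℝ), deriv (fun s => f i p.1 p.2 s) t * f i p.1 p.2 t / (η i * Mi i p.2)
              ∂(((volume : Measure (Fin d → ℝ)).restrict (box d L)).prod volume) := by
        have e1 : ∀ x v : Fin d → ℝ,
            2 * f i x v t * deriv (fun s => f i x v s) t / (η i * Mi i v)
            = 2 * (deriv (fun s => f i x v s) t * f i x v t / (η i * Mi i v)) := by
          intro x v; ring
        simp only [e1, MeasureTheory.integral_const_mul]
        rw [hiter _ hI1]
      have hrhs : (∫ x in box d L, ∫ v,
            (∑ j, (k i j * ρ j x t * Mi i v - k j i * f i x v t)) * f i x v t / (η i * Mi i v))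
          = ∫ p : (Fin d → ℝ) × (Fin d → ℝ), (∑ j, (k i j * ρ j p.1 t * Mi i p.2 - k j i * f i p.1 p.2 t)) * f i p.1 p.2 t
              / (η i * Mi i p.2)
              ∂(((volume : Measure (Fin d → ℝ)).restrict (box d L)).prod volume) :=
        hiter _ hI3
      have hsplit : (∫ p : (Fin d → ℝ) × (Fin d → ℝ), (∑ j, (k i j * ρ j p.1 t * Mi i p.2 - k j i * f i p.1 p.2 t))
              * f i p.1 p.2 t / (η i * Mi i p.2)
            ∂(((volume : Measure (Fin d → ℝ)).restrict (box d L)).prod volume))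
          = (∫ p : (Fin d → ℝ) × (Fin d → ℝ), deriv (fun s => f i p.1 p.2 s) t * f i p.1 p.2 t / (η i * Mi i p.2)
              ∂(((volume : Measure (Fin d → ℝ)).restrict (box d L)).prod volume))
            + (∫ p : (Fin d → ℝ) × (Fin d → ℝ), (∑ l, p.2 l * pd (fun y => f i y p.2 t) l p.1) * f i p.1 p.2 t
                / (η i * Mi i p.2)
              ∂(((volume : Measure (Fin d → ℝ)).restrict (box d L)).prod volume)) := by
        rw [h123]
        exact integral_add hI1 hI2
      rw [hlhs, hrhs, hsplit, hzero]
      ring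
    · rw [if_neg hi, if_neg hi]
      have hle := le_of_not_gt hi
      have hptw : ∀ x : Fin d → ℝ, 2 * ρ i x t * deriv (fun s => ρ i x s) t / η i
          = 2 * ((∑ j, (k i j * ρ j x t - k j i * ρ i x t)) * ρ i x t / η i) := by
        intro x; rw [hode i hle x t ht]; ring
      simp only [hptw]
      rw [MeasureTheory.integral_const_mul]
      ring
  refine ⟨?_, key2⟩
  have hD := (hder t ht).const_mul (1/2 : ℝ)
  rwa [hder1] at hD

end
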